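/- Let A be a CQG algebra with Haar functional h, Z ⊆ A a right coideal *-subalgebra (Δ(Z) ⊆ Z ⊗ A), and V ⊆ Z a finite-dimensional subcomodule with orthonormal basis {e_i}_{i=1}^N for the inner product ⟨z,w⟩ = h(w* z). Then the element ζ̃ = ∑_{i=1}^N e_i e_i* ∈ Z satisfies Δ(ζ̃) = ζ̃ ⊗ 1_A, hence ζ̃ = h(ζ̃)·1 with h(ζ̃) = ∑_i ⟨e_i*, e_i*⟩ > 0. -/
import Mathlib


open scoped TensorProduct

set_option maxHeartbeats 1000000 in
set_option synthInstance.maxHeartbeats 1000000 in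
theorem invariant_element_of_subcomodule
    {A : Type*} [Ring A] [StarRing A] [HopfAlgebra ℂ A]
    (h : A →ₗ[ℂ] ℂ) (hone : h 1 = 1)
    (hinvL : ∀ a : A, (TensorProduct.lid ℂ A)
      ((LinearMap.rTensor A h) (Coalgebra.comul (R := ℂ) a)) = h a • 1)
    (hinvR : ∀ a : A, (TensorProduct.rid ℂ A)
      ((LinearMap.lTensor A h) (Coalgebra.comul (R := ℂ) a)) = h a • 1)
    (hpos : ∀ a : A, a ≠ 0 → ∃ r : ℝ, 0 < r ∧ h (star a * a) = r)
    (Z : Subalgebra ℂ A) (hZstar : ∀ z ∈ Z, star z ∈ Z)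
    (hZcoideal : ∀ z ∈ Z, Coalgebra.comul (R := ℂ) z ∈
      LinearMap.range (TensorProduct.map (Subalgebra.toSubmodule Z).subtype
        (LinearMap.id (R := ℂ) (M := A))))
    (N : ℕ) (hN : 1 ≤ N) (e : Fin N → A) (he : ∀ i, e i ∈ Z)
    (horth : ∀ i j, h (star (e j) * e i) = if i = j then 1 else 0)
    (π : Fin N → Fin N → A)
    (hcomod : ∀ i, Coalgebra.comul (R := ℂ) (e i) = ∑ k, e k ⊗ₜ[ℂ] π k i)
    (hcomodStar : ∀ i, Coalgebra.comul (R := ℂ) (star (e i)) =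
      ∑ k, star (e k) ⊗ₜ[ℂ] star (π k i))
    (hunitary : ∀ i j, (∑ k, star (π k i) * π k j) = if i = j then (1 : A) else 0) :
    Coalgebra.comul (R := ℂ) (∑ i, e i * star (e i)) =
        (∑ i, e i * star (e i)) ⊗ₜ[ℂ] (1 : A) ∧
      (∑ i, e i * star (e i)) = h (∑ i, e i * star (e i)) • (1 : A) ∧
      h (∑ i, e i * star (e i)) = ∑ i, h (e i * star (e i)) ∧
      ∃ r : ℝ, 0 < r ∧ h (∑ i, e i * star (e i)) = r := by
  classical
  let f : Fin N → (A →ₗ[ℂ] ℂ) := fun j => h ∘ₗ LinearMap.mulLeft ℂ (star (e j))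
  have hfe : ∀ j l, f j (e l) = if l = j then 1 else 0 := fun j l => horth l j
  -- comultiplication of the matrix coefficients
  have hcomulπ : ∀ j i, Coalgebra.comul (R := ℂ) (π j i) = ∑ k, π j k ⊗ₜ[ℂ] π k i := by
    intro j i
    have T := Coalgebra.coassoc_apply (R := ℂ) (a := e i)
    rw [hcomod i, map_sum, map_sum] at T
    simp only [LinearMap.rTensor_tmul, LinearMap.lTensor_tmul, hcomod, TensorProduct.sum_tmul,
      map_sum, TensorProduct.assoc_tmul] at T
    have T2 := congrArg ((TensorProduct.lid ℂ (A ⊗[ℂ] A)).toLinearMap ∘ₗ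
      LinearMap.rTensor (A ⊗[ℂ] A) (f j)) T
    simpa [map_sum, LinearMap.rTensor_tmul, hfe, TensorProduct.ite_tmul,
      apply_ite (TensorProduct.lid ℂ (A ⊗[ℂ] A)), Finset.sum_ite_eq,
      TensorProduct.lid_tmul] using T2.symm
  -- counit of the matrix coefficients
  have hεπ : ∀ j i, Coalgebra.counit (R := ℂ) (π j i) = if i = j then 1 else 0 := by
    intro j i
    have T := Coalgebra.lTensor_counit_comul (R := ℂ) (a := e i)
    rw [hcomod i, map_sum] at T
    have T2 := congrArg (f j ∘ₗ (TensorProduct.rid ℂ A).toLinearMap) T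
    simpa [map_sum, TensorProduct.rid_tmul, map_smul, hfe, smul_eq_mul, mul_ite, mul_one,
      mul_zero, Finset.sum_ite_eq] using T2
  -- antipode identities
  have SL : ∀ k l, ∑ i, HopfAlgebra.antipode (R := ℂ) (π k i) * π i l
      = if l = k then (1 : A) else 0 := by
    intro k l
    have T := HopfAlgebra.mul_antipode_rTensor_comul_apply (R := ℂ) (a := π k l)
    rw [hcomulπ k l, map_sum, map_sum] at T
    simpa [LinearMap.rTensor_tmul, LinearMap.mul'_apply, hεπ,
      Algebra.algebraMap_eq_smul_one, apply_ite] using T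
  have SR : ∀ k l, ∑ i, π k i * HopfAlgebra.antipode (R := ℂ) (π i l)
      = if l = k then (1 : A) else 0 := by
    intro k l
    have T := HopfAlgebra.mul_antipode_lTensor_comul_apply (R := ℂ) (a := π k l)
    rw [hcomulπ k l, map_sum, map_sum] at T
    simpa [LinearMap.lTensor_tmul, LinearMap.mul'_apply, hεπ,
      Algebra.algebraMap_eq_smul_one, apply_ite] using T
  -- star of matrix coefficients equals antipode
  have starπ : ∀ l i, star (π l i) = HopfAlgebra.antipode (R := ℂ) (π i l) := by
    intro l i
    calc star (π l i) = ∑ k, star (π k i) * (if l = k then (1 : A) else 0) := by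
          simp [mul_ite, mul_one, mul_zero, Finset.sum_ite_eq]
      _ = ∑ k, star (π k i) * ∑ j, π k j * HopfAlgebra.antipode (R := ℂ) (π j l) := by
          simp only [SR]
      _ = ∑ j, (∑ k, star (π k i) * π k j) * HopfAlgebra.antipode (R := ℂ) (π j l) := by
          simp only [Finset.mul_sum, Finset.sum_mul, mul_assoc]
          rw [Finset.sum_comm]
      _ = ∑ j, (if i = j then (1 : A) else 0) * HopfAlgebra.antipode (R := ℂ) (π j l) := by
          simp only [hunitary]
      _ = HopfAlgebra.antipode (R := ℂ) (π i l) := by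
          simp [ite_mul, one_mul, zero_mul, Finset.sum_ite_eq]
  have hUU : ∀ k l, ∑ i, π k i * star (π l i) = if l = k then (1 : A) else 0 := by
    intro k l
    simp only [starπ]
    exact SR k l
  -- the invariance of ζ̃
  have hζ : Coalgebra.comul (R := ℂ) (∑ i, e i * star (e i)) =
      (∑ i, e i * star (e i)) ⊗ₜ[ℂ] (1 : A) := by
    rw [map_sum]
    calc ∑ i, Coalgebra.comul (R := ℂ) (e i * star (e i))
        = ∑ i, ∑ k, ∑ l, (e k * star (e l)) ⊗ₜ[ℂ] (π k i * star (π l i)) := by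
          simp [Bialgebra.comul_mul, hcomod, hcomodStar, Finset.sum_mul, Finset.mul_sum,
            Algebra.TensorProduct.tmul_mul_tmul]
          exact Finset.sum_congr rfl fun i _ => by rw [Finset.sum_comm]
      _ = ∑ k, ∑ l, (e k * star (e l)) ⊗ₜ[ℂ] (∑ i, π k i * star (π l i)) := by
          rw [Finset.sum_comm]
          refine Finset.sum_congr rfl fun k _ => ?_
          rw [Finset.sum_comm]
          refine Finset.sum_congr rfl fun l _ => ?_
          rw [TensorProduct.tmul_sum]
      _ = (∑ i, e i * star (e i)) ⊗ₜ[ℂ] (1 : A) := by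
          simp [hUU, TensorProduct.tmul_ite, Finset.sum_ite_eq, TensorProduct.sum_tmul]
  -- ζ̃ = h(ζ̃) • 1
  have h2 : (∑ i, e i * star (e i)) = h (∑ i, e i * star (e i)) • (1 : A) := by
    have hinv := hinvR (∑ i, e i * star (e i))
    rw [hζ] at hinv
    simpa [LinearMap.lTensor_tmul, hone, TensorProduct.rid_tmul] using hinv
  -- positivity
  have hne : ∀ i, star (e i) ≠ 0 := by
    intro i hi
    have h0 : e i = 0 := by simpa using congrArg star hi
    have := horth i i
    simp [h0] at this
  choose r hr hhr using fun i => hpos (star (e i)) (hne i)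
  refine ⟨hζ, h2, map_sum h _ _, ∑ i, r i, ?_, ?_⟩
  · haveI : Nonempty (Fin N) := ⟨⟨0, hN⟩⟩
    exact Finset.sum_pos (fun i _ => hr i) Finset.univ_nonempty
  · rw [map_sum]
    push_cast
    exact Finset.sum_congr rfl fun i _ => by simpa [star_star] using hhr i
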